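/- Let N ≥ 2 be an integer, let x_1, …, x_M ∈ ℝ^N (M ≥ 1) be vectors with strictly positive entries, let α ∈ (0, 1), and set p₀ = − (ln N)/(ln(1/α)). Let j₀ ∈ {1, …, M} be an index maximizing f(x_j, p₀) over j ∈ {1, …, M}, where f(x, p) = ((1/N)·∑_{i=1}^N x_i^p)^{1/p}. Then for every real p ≤ p₀ one has f(x_{j₀}, p) ≥ α · max_{j ∈ {1,…,M}} f(x_j, p); that is, the maximizer at p₀ is an α-approximate maximizer of the p-mean objective simultaneously for all p ≤ p₀. -/

import Mathlib

open Real BigOperators Finset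

/-- Generalized `p`-mean of a vector `x ∈ ℝ^N` for nonzero real exponent `p`. -/
noncomputable def pmean {N : ℕ} (x : Fin N → ℝ) (p : ℝ) : ℝ :=
  ((1 / N : ℝ) * ∑ i, x i ^ p) ^ (1 / p)

lemma sum_rpow_pos {N : ℕ} (hN : 0 < N) (x : Fin N → ℝ) (hx : ∀ i, 0 < x i) (p : ℝ) :
    0 < ∑ i, x i ^ p :=
  Finset.sum_pos (fun i _ => Real.rpow_pos_of_pos (hx i) p)
    (by simpa [Finset.univ_nonempty_iff] using Fin.pos_iff_nonempty.mp hN)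

/-- Monotonicity of the p-mean for negative exponents. -/
lemma pmean_mono_neg {N : ℕ} (hN : 0 < N) (x : Fin N → ℝ) (hx : ∀ i, 0 < x i)
    {p q : ℝ} (hq : q < 0) (hpq : p ≤ q) : pmean x p ≤ pmean x q := by
  have hp : p < 0 := lt_of_le_of_lt hpq hq
  have hNR : (0 : ℝ) < (N : ℝ) := by exact_mod_cast hN
  set r : ℝ := p / q with hr
  have hr1 : 1 ≤ r := by
    rw [hr, le_div_iff_of_neg hq]; linarith
  have hqr : q * r = p := by
    rw [hr, mul_comm, div_mul_cancel₀ _ hq.ne]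
  have hbase : (0 : ℝ) < (1 / N : ℝ) * ∑ i, x i ^ q := by
    have := sum_rpow_pos hN x hx q; positivity
  have hmean : ((1 / N : ℝ) * ∑ i, x i ^ q) ^ r ≤ (1 / N : ℝ) * ∑ i, x i ^ p := by
    have key := Real.rpow_arith_mean_le_arith_mean_rpow Finset.univ
      (fun _ : Fin N => (1 / N : ℝ)) (fun i => x i ^ q)
      (fun i _ => by positivity)
      (by simp [Finset.sum_const, Finset.card_univ]; field_simp)
      (fun i _ => (Real.rpow_pos_of_pos (hx i) q).le) hr1
    calc ((1 / N : ℝ) * ∑ i, x i ^ q) ^ r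
        = (∑ i, (1 / N : ℝ) * x i ^ q) ^ r := by rw [Finset.mul_sum]
      _ ≤ ∑ i, (1 / N : ℝ) * (x i ^ q) ^ r := key
      _ = (1 / N : ℝ) * ∑ i, x i ^ p := by
          rw [← Finset.mul_sum]
          congr 1
          exact Finset.sum_congr rfl fun i _ => by
            rw [← Real.rpow_mul (hx i).le, hqr]
  have h2 : ((1 / N : ℝ) * ∑ i, x i ^ p) ^ (1 / p)
      ≤ (((1 / N : ℝ) * ∑ i, x i ^ q) ^ r) ^ (1 / p) := by
    refine Real.rpow_le_rpow_of_nonpos ?_ hmean (one_div_nonpos.mpr hp.le)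
    · positivity
  have hrp : r * (1 / p) = 1 / q := by
    rw [hr]
    field_simp
    rw [mul_comm, div_mul_eq_div_div, div_right_comm, div_self hp.ne]
  calc pmean x p ≤ (((1 / N : ℝ) * ∑ i, x i ^ q) ^ r) ^ (1 / p) := h2
    _ = ((1 / N : ℝ) * ∑ i, x i ^ q) ^ (r * (1 / p)) := by
        rw [← Real.rpow_mul hbase.le]
    _ = pmean x q := by rw [hrp]; rfl

/-- Lower bound: the p-mean (negative p) is at least the minimum entry. -/
lemma min_le_pmean_neg {N : ℕ} (hN : 0 < N) (x : Fin N → ℝ) (hx : ∀ i, 0 < x i)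
    {q : ℝ} (hq : q < 0) {m : ℝ} (hm : 0 < m) (hmx : ∀ i, m ≤ x i) :
    m ≤ pmean x q := by
  have hNR : (0 : ℝ) < (N : ℝ) := by exact_mod_cast hN
  have hterm : ∀ i, x i ^ q ≤ m ^ q := fun i =>
    Real.rpow_le_rpow_of_nonpos hm (hmx i) hq.le
  have hsum : ∑ i, x i ^ q ≤ (N : ℝ) * m ^ q := by
    calc ∑ i, x i ^ q ≤ ∑ _i : Fin N, m ^ q :=
          Finset.sum_le_sum fun i _ => hterm i
      _ = (N : ℝ) * m ^ q := by simp [Finset.sum_const, mul_comm]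
  have hle : (1 / N : ℝ) * ∑ i, x i ^ q ≤ m ^ q := by
    rw [div_mul_eq_mul_div, one_mul, div_le_iff₀ hNR]
    linarith [hsum]
  have hpos : (0 : ℝ) < (1 / N : ℝ) * ∑ i, x i ^ q := by
    have := sum_rpow_pos hN x hx q; positivity
  calc m = (m ^ q) ^ (1 / q) := by
        rw [← Real.rpow_mul hm.le, mul_one_div, div_self hq.ne, Real.rpow_one]
    _ ≤ ((1 / N : ℝ) * ∑ i, x i ^ q) ^ (1 / q) :=
        Real.rpow_le_rpow_of_nonpos hpos hle (one_div_nonpos.mpr hq.le)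
    _ = pmean x q := rfl

/-- Upper bound: the p-mean (negative p) is at most `(1/N)^(1/q)` times any entry. -/
lemma pmean_le_neg {N : ℕ} (hN : 0 < N) (x : Fin N → ℝ) (hx : ∀ i, 0 < x i)
    {q : ℝ} (hq : q < 0) (i : Fin N) :
    pmean x q ≤ (1 / N : ℝ) ^ (1 / q) * x i := by
  have hNR : (0 : ℝ) < (N : ℝ) := by exact_mod_cast hN
  have hsum : x i ^ q ≤ ∑ j, x j ^ q :=
    Finset.single_le_sum (fun j _ => (Real.rpow_pos_of_pos (hx j) q).le)
      (Finset.mem_univ i)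
  have hle : (1 / N : ℝ) * x i ^ q ≤ (1 / N : ℝ) * ∑ j, x j ^ q :=
    mul_le_mul_of_nonneg_left hsum (by positivity)
  have hpos : (0 : ℝ) < (1 / N : ℝ) * x i ^ q := by
    have := Real.rpow_pos_of_pos (hx i) q; positivity
  calc pmean x q ≤ ((1 / N : ℝ) * x i ^ q) ^ (1 / q) :=
        Real.rpow_le_rpow_of_nonpos hpos hle (one_div_nonpos.mpr hq.le)
    _ = (1 / N : ℝ) ^ (1 / q) * (x i ^ q) ^ (1 / q) := by
        rw [Real.mul_rpow (by positivity) (Real.rpow_pos_of_pos (hx i) q).le]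
    _ = (1 / N : ℝ) ^ (1 / q) * x i := by
        rw [← Real.rpow_mul (hx i).le, mul_one_div, div_self hq.ne, Real.rpow_one]

/-- A maximizer of the `p₀`-mean objective, where `p₀ = -(ln N)/(ln (1/α))`, is an
`α`-approximate maximizer of the `p`-mean objective simultaneously for all `p ≤ p₀`. -/
theorem maximizer_at_p0_approximates_all_smaller_p {N M : ℕ} (hN : 2 ≤ N) (hM : 1 ≤ M)
    (x : Fin M → Fin N → ℝ) (hx : ∀ j i, 0 < x j i)
    (α : ℝ) (hα : α ∈ Set.Ioo (0 : ℝ) 1)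
    (p₀ : ℝ) (hp₀ : p₀ = -(Real.log N / Real.log (1 / α)))
    (j₀ : Fin M) (hj₀ : ∀ j, pmean (x j) p₀ ≤ pmean (x j₀) p₀)
    (p : ℝ) (hp : p ≤ p₀) :
    α * (Finset.univ.sup' ⟨⟨0, hM⟩, Finset.mem_univ _⟩ fun j => pmean (x j) p)
      ≤ pmean (x j₀) p := by
  obtain ⟨hα0, hα1⟩ := hα
  have hN0 : 0 < N := by omega
  have hNR1 : (1 : ℝ) < (N : ℝ) := by exact_mod_cast (by omega : 1 < N)
  have hlogN : 0 < Real.log N := Real.log_pos hNR1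
  have hloginv : 0 < Real.log (1 / α) := Real.log_pos (by
    rw [lt_div_iff₀ hα0]; linarith)
  have hp₀neg : p₀ < 0 := by
    rw [hp₀]; exact neg_neg_iff_pos.mpr (div_pos hlogN hloginv)
  have hpneg : p < 0 := lt_of_le_of_lt hp hp₀neg
  -- key computation : (1/N) ^ (1/p₀) = 1/α
  have hkey : (1 / N : ℝ) ^ (1 / p₀) = 1 / α := by
    have hexp : Real.log (1 / N : ℝ) * (1 / p₀) = Real.log (1 / α) := by
      rw [Real.log_div one_ne_zero (by positivity), Real.log_one, zero_sub, hp₀]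
      field_simp
    rw [Real.rpow_def_of_pos (by positivity), hexp, Real.exp_log (by positivity)]
  -- minimum entry of x j₀
  have hNe : (Finset.univ : Finset (Fin N)).Nonempty :=
    ⟨⟨0, by omega⟩, Finset.mem_univ _⟩
  obtain ⟨i₀, _, hi₀⟩ := Finset.exists_mem_eq_inf' hNe (x j₀)
  set m : ℝ := Finset.univ.inf' hNe (x j₀) with hm
  have hm0 : 0 < m := hi₀ ▸ hx j₀ i₀
  have hmx : ∀ i, m ≤ x j₀ i := fun i => Finset.inf'_le _ (Finset.mem_univ i)
  -- per-index bound
  have hbound : ∀ j, α * pmean (x j) p ≤ pmean (x j₀) p := by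
    intro j
    have h1 : pmean (x j) p ≤ pmean (x j) p₀ :=
      pmean_mono_neg hN0 (x j) (hx j) hp₀neg hp
    have h2 : pmean (x j₀) p₀ ≤ (1 / α) * m := by
      have := pmean_le_neg hN0 (x j₀) (hx j₀) hp₀neg i₀
      rwa [hkey, ← hi₀] at this
    have h3 : m ≤ pmean (x j₀) p :=
      min_le_pmean_neg hN0 (x j₀) (hx j₀) hpneg hm0 hmx
    have h4 : α * pmean (x j) p₀ ≤ α * ((1 / α) * m) :=
      mul_le_mul_of_nonneg_left ((hj₀ j).trans h2) hα0.le
    have h5 : α * ((1 / α) * m) = m := by field_simp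
    nlinarith [mul_le_mul_of_nonneg_left h1 hα0.le]
  obtain ⟨j, _, hj⟩ := Finset.exists_mem_eq_sup'
    (⟨⟨0, hM⟩, Finset.mem_univ _⟩ : (Finset.univ : Finset (Fin M)).Nonempty)
    (fun j => pmean (x j) p)
  rw [hj]
  exact hbound j
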